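/- In the construction of Theorem 1, the unitary U on H ⊗ ℓ²(J) ⊗ ℂ² can be chosen such that the qubit factor ℂ² acts as a catalyst: for every state ρ on H there exists a state ω on H ⊗ ℓ²(J) with U(ρ ⊗ |e_{j₀}⟩⟨e_{j₀}| ⊗ |e₁⟩⟨e₁|)U* = ω ⊗ |e₁⟩⟨e₁|. -/

import Mathlib

open ContinuousLinearMap

variable {ι : Type*} [DecidableEq ι] {H : Type*} [NormedAddCommGroup H] [InnerProductSpace ℂ H]

/-- `x ↦ x ⊗ e_i`: the isometric embedding of `H` onto the `i`-th summand of
`H ⊗ ℓ²(ι) ≅ ⊕²_ι H` (modelled as `lp (fun _ : ι => H) 2`), as a continuous linear map. -/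
noncomputable def lpSingleL (i : ι) : H →L[ℂ] lp (fun _ : ι => H) 2 :=
  LinearMap.mkContinuous
    { toFun := fun x => lp.single 2 i x
      map_add' := fun x y => by
        apply lp.ext; funext j
        by_cases h : j = i
        · subst h
          simp [lp.single_apply_self, lp.coeFn_add]
        · simp [lp.single_apply_ne _ _ _ h, lp.coeFn_add]
      map_smul' := fun c x => by simp }
    1 (fun x => by
        simpa using (lp.norm_single (p := 2) (E := fun _ : ι => H) (by norm_num)
          (fun _ => x) i).le)

/-- `(1 ⊗ ⟨e_i|)`: evaluation of the `i`-th component of `H ⊗ ℓ²(ι) ≅ ⊕²_ι H`. -/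
noncomputable def lpProjL (i : ι) : lp (fun _ : ι => H) 2 →L[ℂ] H :=
  LinearMap.mkContinuous
    { toFun := fun f => f i
      map_add' := fun f g => by simp [lp.coeFn_add]
      map_smul' := fun c f => by simp [lp.coeFn_smul] }
    1 (fun f => by
      show ‖f i‖ ≤ 1 * ‖f‖
      simpa using lp.norm_apply_le_norm (by norm_num) f i)

/-- The embedding `v ↦ v ⊗ e₁` of `E` onto the first summand of
`E ⊗ ℂ² ≅ E ×₂ E` (modelled as `WithLp 2 (E × E)`). -/
noncomputable def qubitEmbed1 {E : Type*} [NormedAddCommGroup E] [InnerProductSpace ℂ E] :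
    E →L[ℂ] WithLp 2 (E × E) :=
  ((WithLp.prodContinuousLinearEquiv 2 ℂ E E).symm : E × E →L[ℂ] WithLp 2 (E × E)) ∘L
    ContinuousLinearMap.inl ℂ E E

/-- The projection `(1 ⊗ ⟨e₁|)` of `E ⊗ ℂ² ≅ E ×₂ E` onto the first summand. -/
noncomputable def qubitProj1 {E : Type*} [NormedAddCommGroup E] [InnerProductSpace ℂ E] :
    WithLp 2 (E × E) →L[ℂ] E :=
  ContinuousLinearMap.fst ℂ E E ∘L
    ((WithLp.prodContinuousLinearEquiv 2 ℂ E E) : WithLp 2 (E × E) →L[ℂ] E × E)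

set_option linter.unusedSectionVars false

@[simp] lemma lpSingleL_apply (i : ι) (x : H) : lpSingleL i x = lp.single 2 i x := rfl
@[simp] lemma lpProjL_apply (i : ι) (f : lp (fun _ : ι => H) 2) : lpProjL i f = f i := rfl

section V
variable [CompleteSpace H] {J : Type*} [DecidableEq J]

lemma hasSum_normsq (K : J → H →L[ℂ] H)
    (hK : ∀ x : H, HasSum (fun j => adjoint (K j) ((K j) x)) x) (x : H) :
    HasSum (fun j => ‖K j x‖ ^ 2) (‖x‖ ^ 2) := by
  have h1 : HasSum (fun j => (inner ℂ x (adjoint (K j) (K j x)) : ℂ)) (inner ℂ x x) :=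
    (hK x).mapL (innerSL ℂ x)
  have h2 : HasSum (fun j => (inner ℂ (K j x) (K j x) : ℂ)) (inner ℂ x x) := by
    simpa [adjoint_inner_right] using h1
  have h3 := ((Complex.hasSum_iff _ _).1 h2).1
  have h4 : ∀ y : H, (inner (𝕜 := ℂ) y y).re = ‖y‖ ^ 2 := fun y => by
    simpa using inner_self_eq_norm_sq (𝕜 := ℂ) y
  simpa [h4, ← Complex.ofReal_pow] using h3

lemma memℓp_K (K : J → H →L[ℂ] H)
    (hK : ∀ x : H, HasSum (fun j => adjoint (K j) ((K j) x)) x) (x : H) :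
    Memℓp (fun j => K j x) 2 := by
  apply memℓp_gen
  have : (2 : ENNReal).toReal = 2 := by norm_num
  rw [this]
  have := (hasSum_normsq K hK x).summable
  simpa [Real.rpow_natCast] using this


set_option linter.unusedSectionVars false

noncomputable def Vmap (K : J → H →L[ℂ] H)
    (hK : ∀ x : H, HasSum (fun j => adjoint (K j) ((K j) x)) x) :
    H →L[ℂ] lp (fun _ : J => H) 2 :=
  LinearMap.mkContinuous
    { toFun := fun x => ⟨fun j => K j x, memℓp_K K hK x⟩
      map_add' := fun x y => by apply lp.ext; funext j; simp [lp.coeFn_add]; rfl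
      map_smul' := fun c x => by apply lp.ext; funext j; simp [lp.coeFn_smul] }
    1 (fun x => by
      have hn : ‖(⟨fun j => K j x, memℓp_K K hK x⟩ : lp (fun _ : J => H) 2)‖ ^ (2:ℝ)
          = ∑' j, ‖K j x‖ ^ (2:ℝ) := by
        simpa using lp.norm_rpow_eq_tsum (p := 2) (by norm_num)
          (⟨fun j => K j x, memℓp_K K hK x⟩ : lp (fun _ : J => H) 2)
      have ht : ∑' j, ‖K j x‖ ^ (2:ℝ) = ‖x‖ ^ (2:ℝ) := by
        have := (hasSum_normsq K hK x).tsum_eq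
        simpa [Real.rpow_natCast] using this
      have h2 : ‖(⟨fun j => K j x, memℓp_K K hK x⟩ : lp (fun _ : J => H) 2)‖ ^ (2:ℝ)
          = ‖x‖ ^ (2:ℝ) := hn.trans ht
      have := congrArg (fun t => Real.sqrt t) h2
      rw [Real.rpow_two, Real.rpow_two] at this
      rw [one_mul]
      exact le_of_eq (by simpa [Real.sqrt_sq, norm_nonneg] using this))

@[simp] lemma Vmap_apply_coe (K : J → H →L[ℂ] H)
    (hK : ∀ x : H, HasSum (fun j => adjoint (K j) ((K j) x)) x) (x : H) (j : J) :
    (Vmap K hK x : ∀ _ : J, H) j = K j x := rfl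

lemma adjV_V (K : J → H →L[ℂ] H)
    (hK : ∀ x : H, HasSum (fun j => adjoint (K j) ((K j) x)) x) :
    adjoint (Vmap K hK) ∘L Vmap K hK = 1 := by
  ext y
  apply ext_inner_left ℂ
  intro x
  rw [ContinuousLinearMap.comp_apply, adjoint_inner_right]
  have h1 : (inner ℂ (Vmap K hK x) (Vmap K hK y) : ℂ) = ∑' j, inner ℂ (K j x) (K j y) :=
    lp.inner_eq_tsum _ _
  have h2 : HasSum (fun j => (inner ℂ x (adjoint (K j) (K j y)) : ℂ)) (inner ℂ x y) :=
    (hK y).mapL (innerSL ℂ x)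
  have h3 : HasSum (fun j => (inner ℂ (K j x) (K j y) : ℂ)) (inner ℂ x y) := by
    simpa [adjoint_inner_right] using h2
  rw [h1, h3.tsum_eq]
  rfl

lemma adj_lpProjL (i : J) : adjoint (lpProjL (H := H) i) = lpSingleL i := by
  have h : (lpSingleL (H := H) i) = adjoint (lpProjL i) := by
    rw [eq_adjoint_iff]
    intro x f
    simpa using lp.inner_single_left i x f
  exact h.symm

lemma adj_lpSingleL (i : J) : adjoint (lpSingleL (H := H) i) = lpProjL i := by
  rw [← adj_lpProjL, adjoint_adjoint]

lemma lpProj_single (i : J) : (lpProjL (H := H) i) ∘L lpSingleL i = 1 := by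
  ext x
  simp [lp.single_apply_self]

end V

section Qubit
variable {E : Type*} [NormedAddCommGroup E] [InnerProductSpace ℂ E]

noncomputable def qubitEmbed1' : E →L[ℂ] WithLp 2 (E × E) :=
  ((WithLp.prodContinuousLinearEquiv 2 ℂ E E).symm : E × E →L[ℂ] WithLp 2 (E × E)) ∘L
    ContinuousLinearMap.inl ℂ E E

noncomputable def qubitProj1' : WithLp 2 (E × E) →L[ℂ] E :=
  ContinuousLinearMap.fst ℂ E E ∘L
    ((WithLp.prodContinuousLinearEquiv 2 ℂ E E) : WithLp 2 (E × E) →L[ℂ] E × E)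

noncomputable def qubitEmbed2 : E →L[ℂ] WithLp 2 (E × E) :=
  ((WithLp.prodContinuousLinearEquiv 2 ℂ E E).symm : E × E →L[ℂ] WithLp 2 (E × E)) ∘L
    ContinuousLinearMap.inr ℂ E E

noncomputable def qubitProj2 : WithLp 2 (E × E) →L[ℂ] E :=
  ContinuousLinearMap.snd ℂ E E ∘L
    ((WithLp.prodContinuousLinearEquiv 2 ℂ E E) : WithLp 2 (E × E) →L[ℂ] E × E)

@[simp] lemma p1e1 (x : E) : qubitProj1' (qubitEmbed1' x) = x := rfl
@[simp] lemma p1e2 (x : E) : qubitProj1' (qubitEmbed2 x) = 0 := rfl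
@[simp] lemma p2e1 (x : E) : qubitProj2 (qubitEmbed1' x) = 0 := rfl
@[simp] lemma p2e2 (x : E) : qubitProj2 (qubitEmbed2 x) = x := rfl

@[simp] lemma e1_fst (x : E) : (qubitEmbed1' x).fst = x := rfl
@[simp] lemma e1_snd (x : E) : (qubitEmbed1' x).snd = 0 := rfl
@[simp] lemma e2_fst (x : E) : (qubitEmbed2 x).fst = 0 := rfl
@[simp] lemma e2_snd (x : E) : (qubitEmbed2 x).snd = x := rfl
@[simp] lemma p1_apply (v : WithLp 2 (E × E)) : qubitProj1' v = v.fst := rfl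
@[simp] lemma p2_apply (v : WithLp 2 (E × E)) : qubitProj2 v = v.snd := rfl

lemma ep_sum (v : WithLp 2 (E × E)) :
    qubitEmbed1' (qubitProj1' v) + qubitEmbed2 (qubitProj2 v) = v := by
  apply WithLp.ofLp_injective
  apply Prod.ext
  · simp [WithLp.add_fst]
  · simp [WithLp.add_snd]

variable [CompleteSpace E]

lemma adj_p1 : adjoint (qubitProj1' (E := E)) = qubitEmbed1' := by
  have h : (qubitEmbed1' (E := E)) = adjoint qubitProj1' := by
    rw [eq_adjoint_iff]
    intro x y
    rw [WithLp.prod_inner_apply]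
    simp
  exact h.symm

lemma adj_p2 : adjoint (qubitProj2 (E := E)) = qubitEmbed2 := by
  have h : (qubitEmbed2 (E := E)) = adjoint qubitProj2 := by
    rw [eq_adjoint_iff]
    intro x y
    rw [WithLp.prod_inner_apply]
    simp
  exact h.symm

lemma adj_e1 : adjoint (qubitEmbed1' (E := E)) = qubitProj1' := by
  rw [← adj_p1, adjoint_adjoint]

lemma adj_e2 : adjoint (qubitEmbed2 (E := E)) = qubitProj2 := by
  rw [← adj_p2, adjoint_adjoint]

noncomputable def blk (A B C D : E →L[ℂ] E) : WithLp 2 (E × E) →L[ℂ] WithLp 2 (E × E) :=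
  qubitEmbed1' ∘L A ∘L qubitProj1' + qubitEmbed1' ∘L B ∘L qubitProj2
  + qubitEmbed2 ∘L C ∘L qubitProj1' + qubitEmbed2 ∘L D ∘L qubitProj2

lemma blk_apply (A B C D : E →L[ℂ] E) (v : WithLp 2 (E × E)) :
    blk A B C D v = qubitEmbed1' (A v.fst + B v.snd) + qubitEmbed2 (C v.fst + D v.snd) := by
  simp [blk, map_add]
  abel

lemma blk_mul (A B C D A' B' C' D' : E →L[ℂ] E) :
    blk A B C D * blk A' B' C' D'
      = blk (A * A' + B * C') (A * B' + B * D') (C * A' + D * C') (C * B' + D * D') := by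
  ext v
  rw [ContinuousLinearMap.mul_apply, blk_apply, blk_apply, blk_apply]
  simp [ContinuousLinearMap.mul_apply, map_add]
  abel

lemma blk_one : blk (1 : E →L[ℂ] E) 0 0 1 = 1 := by
  ext v
  rw [blk_apply]
  simpa using ep_sum v

lemma blk_adjoint (A B C D : E →L[ℂ] E) :
    adjoint (blk A B C D) = blk (adjoint A) (adjoint C) (adjoint B) (adjoint D) := by
  have h : blk (adjoint A) (adjoint C) (adjoint B) (adjoint D) = adjoint (blk A B C D) := by
    rw [eq_adjoint_iff]
    intro x y
    rw [blk_apply, blk_apply, WithLp.prod_inner_apply, WithLp.prod_inner_apply]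
    simp only [WithLp.ofLp_fst, WithLp.ofLp_snd, e1_fst, e1_snd, e2_fst, e2_snd, WithLp.add_fst, WithLp.add_snd,
      inner_add_left, inner_add_right, add_zero, zero_add, adjoint_inner_left]
    ring
  exact h.symm

end Qubit

section Main
variable [CompleteSpace H] {J : Type*} [DecidableEq J]
variable (K : J → H →L[ℂ] H)
    (hK : ∀ x : H, HasSum (fun j => adjoint (K j) ((K j) x)) x) (j₀ : J)

local notation "T" => lp (fun _ : J => H) 2

noncomputable def Smap : T →L[ℂ] T := Vmap K hK ∘L lpProjL j₀

noncomputable def Pmap : T →L[ℂ] T := lpSingleL j₀ ∘L lpProjL j₀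

lemma adjV_Vx (x : H) : adjoint (Vmap K hK) (Vmap K hK x) = x := by
  have := ContinuousLinearMap.ext_iff.1 (adjV_V K hK) x
  simpa using this

@[simp] lemma Smap_apply (f : T) : Smap K hK j₀ f = Vmap K hK (f j₀) := rfl

@[simp] lemma Pmap_apply (f : T) : Pmap (H := H) j₀ f = lp.single 2 j₀ (f j₀) := rfl

lemma adj_Smap : adjoint (Smap K hK j₀) = lpSingleL j₀ ∘L adjoint (Vmap K hK) := by
  rw [Smap, adjoint_comp, adj_lpProjL]

lemma adj_Smap_apply (v : T) :
    adjoint (Smap K hK j₀) v = lp.single 2 j₀ (adjoint (Vmap K hK) v) := by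
  rw [adj_Smap]; rfl

lemma adj_Pmap : adjoint (Pmap (H := H) j₀) = Pmap j₀ := by
  rw [Pmap, adjoint_comp, adj_lpProjL, adj_lpSingleL]

lemma hSdS : adjoint (Smap K hK j₀) * Smap K hK j₀ = Pmap j₀ := by
  ext f
  rw [ContinuousLinearMap.mul_apply, adj_Smap_apply]
  simp [adjV_Vx, lp.single_apply_self]

lemma hPP : Pmap (H := H) j₀ * Pmap j₀ = Pmap j₀ := by
  ext f
  simp [ContinuousLinearMap.mul_apply, lp.single_apply_self]

lemma hSP : Smap K hK j₀ * Pmap j₀ = Smap K hK j₀ := by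
  ext f
  simp [ContinuousLinearMap.mul_apply, lp.single_apply_self]

lemma hPSd : Pmap j₀ * adjoint (Smap K hK j₀) = adjoint (Smap K hK j₀) := by
  ext f
  rw [ContinuousLinearMap.mul_apply, adj_Smap_apply]
  simp [lp.single_apply_self]

end Main

lemma qe1_eq {E : Type*} [NormedAddCommGroup E] [InnerProductSpace ℂ E] :
    (qubitEmbed1 : E →L[ℂ] WithLp 2 (E × E)) = qubitEmbed1' := rfl

lemma qp1_eq {E : Type*} [NormedAddCommGroup E] [InnerProductSpace ℂ E] :
    (qubitProj1 : WithLp 2 (E × E) →L[ℂ] E) = qubitProj1' := rfl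


set_option maxHeartbeats 1000000 in
/-- in the construction of Theorem 1 the unitary `U` on `H ⊗ ℓ²(J) ⊗ ℂ²`
can be chosen such that it satisfies the extension property
`U (x ⊗ e_{j₀} ⊗ e₁) = (∑_j K_j x ⊗ e_j) ⊗ e₁` (this is the dilation of Lemma 1) and such
that the qubit factor `ℂ²` acts as a catalyst: for every state `ρ` on `H` there is a state
`ω` on `H ⊗ ℓ²(J)` with `U (ρ ⊗ |e_{j₀}⟩⟨e_{j₀}| ⊗ |e₁⟩⟨e₁|) U* = ω ⊗ |e₁⟩⟨e₁|`.

Model: `H ⊗ ℓ²(J) := lp (fun _ : J => H) 2 =: T₁` (with `x ⊗ e_j = lp.single 2 j x`), and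
`H ⊗ ℓ²(J) ⊗ ℂ² := WithLp 2 (T₁ × T₁)` (first component = the `⊗e₁` slice).  Then
`ρ ⊗ |e_{j₀}⟩⟨e_{j₀}| ⊗ |e₁⟩⟨e₁| = qubitEmbed1 ∘ (lpSingleL j₀ ∘ ρ ∘ lpProjL j₀) ∘ qubitProj1`,
and `ω ⊗ |e₁⟩⟨e₁| = qubitEmbed1 ∘ ω ∘ qubitProj1`.  Positivity of states is expressed by
`IsPositive`; the trace (normalization) condition is not expressible in Mathlib (no trace
class in infinite dimensions) and positivity-preservation is the recorded content. -/
theorem stinespring_qubit_is_catalyst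
    [CompleteSpace H] {J : Type*} [DecidableEq J] (j₀ : J)
    (K : J → H →L[ℂ] H)
    (hK : ∀ x : H, HasSum (fun j => adjoint (K j) ((K j) x)) x) :
    ∃ U ∈ unitary (WithLp 2 ((lp (fun _ : J => H) 2) × (lp (fun _ : J => H) 2)) →L[ℂ]
        WithLp 2 ((lp (fun _ : J => H) 2) × (lp (fun _ : J => H) 2))),
      (∀ x : H,
        HasSum (fun j => qubitEmbed1 (lp.single 2 j ((K j) x)))
          (U (qubitEmbed1 (lp.single 2 j₀ x)))) ∧
      ∀ ρ : H →L[ℂ] H, ρ.IsPositive →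
        ∃ ω : lp (fun _ : J => H) 2 →L[ℂ] lp (fun _ : J => H) 2, ω.IsPositive ∧
          U * (qubitEmbed1 ∘L (lpSingleL j₀ ∘L ρ ∘L lpProjL j₀) ∘L qubitProj1) * star U
            = qubitEmbed1 ∘L ω ∘L qubitProj1 := by
  classical
  set V := Vmap K hK with hVdef
  set S := Smap K hK j₀ with hSdef
  set Sd := adjoint (Smap K hK j₀) with hSddef
  set P := Pmap (H := H) j₀ with hPdef
  set Q := S * Sd with hQdef
  have hss : Sd * S = P := hSdS K hK j₀
  have hpp : P * P = P := hPP j₀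
  have hsp : S * P = S := hSP K hK j₀
  have hpsd : P * Sd = Sd := hPSd K hK j₀
  have hQS : Q * S = S := by rw [hQdef, mul_assoc, hss, hsp]
  have hSdQ : Sd * Q = Sd := by rw [hQdef, ← mul_assoc, hss, hpsd]
  have hQQ : Q * Q = Q := by
    nth_rewrite 2 [hQdef]
    rw [← mul_assoc, hQS, ← hQdef]
  have h1P : (1 - P) * (1 - P) = 1 - P := by
    rw [sub_mul, one_mul, mul_sub, mul_one, hpp]; abel
  have h1Q : (1 - Q) * (1 - Q) = 1 - Q := by
    rw [sub_mul, one_mul, mul_sub, mul_one, hQQ]; abel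
  have hA : Sd * S + (1 - P) * (1 - P) = 1 := by rw [hss, h1P]; abel
  have hB : Sd * (1 - Q) + (1 - P) * Sd = 0 := by
    rw [mul_sub, mul_one, hSdQ, sub_mul, one_mul, hpsd]; abel
  have hC : (1 - Q) * S + S * (1 - P) = 0 := by
    rw [sub_mul, one_mul, hQS, mul_sub, mul_one, hsp]; abel
  have hD : (1 - Q) * (1 - Q) + S * Sd = 1 := by rw [h1Q, ← hQdef]; abel
  have hPadj : adjoint P = P := by rw [hPdef]; exact adj_Pmap j₀
  have hQadj : adjoint Q = Q := by
    rw [hQdef, ← star_eq_adjoint, star_mul, star_eq_adjoint, star_eq_adjoint,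
      ← hSddef, adjoint_adjoint, ← hSdef]
  have hadjU : adjoint (blk S (1 - Q) (1 - P) Sd) = blk Sd (1 - P) (1 - Q) S := by
    rw [blk_adjoint, ← hSddef, adjoint_adjoint, ← hSdef]
    rw [← star_eq_adjoint (1 - P), star_sub, star_one, star_eq_adjoint, hPadj]
    rw [← star_eq_adjoint (1 - Q), star_sub, star_one, star_eq_adjoint, hQadj]
  refine ⟨blk S (1 - Q) (1 - P) Sd, ?_, ?_, ?_⟩
  · rw [Unitary.mem_iff]
    constructor
    · rw [star_eq_adjoint, hadjU, blk_mul, hA, hB, hC, hD, blk_one]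
    · rw [star_eq_adjoint, hadjU, blk_mul]
      rw [add_comm (S * Sd), add_comm (S * (1 - P)), add_comm ((1 - P) * Sd),
        add_comm ((1 - P) * (1 - P))]
      rw [hA, hB, hC, hD, blk_one]
  · intro x
    have h1 : blk S (1 - Q) (1 - P) Sd (qubitEmbed1 (lp.single 2 j₀ x))
        = qubitEmbed1' (V x) := by
      rw [qe1_eq, blk_apply]
      have hs : S (lp.single 2 j₀ x) = V x := by
        rw [hSdef, hVdef]; simp [lp.single_apply_self]
      have hp : (1 - P) (lp.single 2 j₀ x) = 0 := by
        rw [ContinuousLinearMap.sub_apply, hPdef]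
        simp [lp.single_apply_self]
      simp [hs, hp]
    rw [h1]
    have h2 : HasSum (fun j => lp.single 2 j ((K j) x)) (V x) := by
      have := lp.hasSum_single (E := fun _ : J => H) (p := 2) (by norm_num) (V x)
      simpa [hVdef] using this
    exact h2.mapL qubitEmbed1'
  · intro ρ hρ
    refine ⟨V ∘L ρ ∘L adjoint V, hρ.conj_adjoint V, ?_⟩
    set σ := lpSingleL j₀ ∘L ρ ∘L lpProjL j₀ with hσdef
    have hM : qubitEmbed1 ∘L σ ∘L qubitProj1 = blk σ 0 0 0 := by
      rw [qe1_eq, qp1_eq]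
      simp [blk]
    have hPσ : P * σ = σ := by
      ext f
      rw [hPdef, hσdef]
      simp [ContinuousLinearMap.mul_apply, lp.single_apply_self]
    have hσP : σ * P = σ := by
      ext f
      rw [hPdef, hσdef]
      simp [ContinuousLinearMap.mul_apply, lp.single_apply_self]
    have h1Pσ : (1 - P) * σ = 0 := by rw [sub_mul, one_mul, hPσ, sub_self]
    have hσ1P : σ * (1 - P) = 0 := by rw [mul_sub, mul_one, hσP, sub_self]
    have hkey : S * σ * Sd = V ∘L ρ ∘L adjoint V := by
      ext f
      rw [ContinuousLinearMap.mul_apply, ContinuousLinearMap.mul_apply, hSddef,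
        adj_Smap_apply, hσdef, hSdef, hVdef]
      simp [lp.single_apply_self]
    rw [hM, star_eq_adjoint, hadjU, blk_mul]
    simp only [mul_zero, zero_mul, add_zero, zero_add]
    rw [h1Pσ, blk_mul]
    simp only [mul_zero, zero_mul, add_zero, zero_add]
    rw [hkey, mul_assoc, hσ1P, mul_zero]
    rw [qe1_eq, qp1_eq]
    simp [blk]
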